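/- Let A_1, …, A_k be pairwise commuting N×N matrices with nonnegative integer entries forming an irreducible family, with every row sum of every A_i at least 2 and with A = A_1⋯A_k irreducible; let x be the unimodular Perron–Frobenius eigenvector and let M be the Borel probability measure on X_B determined by the cylinder formula. For m ∈ ℕ let Ṽ_m = span{χ_{[ν]} : ν ∈ F^mB} in L²(X_B, M). Then for every m ≥ 1, Ṽ_m ∩ Ṽ_{m−1}^⊥ equals the linear span of the union of the subspaces E_γ over all γ ∈ FB with |γ| = m − 1. Consequently, for every n ∈ ℕ, 𝒲_n = ⊕_{j=1}^{k} (Ṽ_{nk+j} ∩ Ṽ_{nk+j−1}^⊥), an orthogonal direct sum. -/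

import Mathlib

open scoped Classical ENNReal Topology
open TopologicalSpace MeasureTheory Filter Set
open Fin.NatCast

namespace KBratteli

variable (k N : ℕ) [NeZero k] (A : Fin k → Matrix (Fin N) (Fin N) ℕ)

/-- An edge at level `n` of the stationary `k`-Bratteli diagram of the matrices
`A 0, …, A (k-1)`: an element of `Edge k N A n` is an edge whose source lies in the
level-`(n+1)` vertex set and whose range lies in the level-`n` vertex set (both copies of
`Fin N`); there are exactly `A (n % k) p q` edges with range `p` and source `q`. -/
structure Edge (n : ℕ) : Type where
  rg : Fin N
  src : Fin N
  idx : Fin (A (n : Fin k) rg src)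

/-- The infinite path space `X_B` of the stationary `k`-Bratteli diagram of `A`. -/
def PathSpace : Type :=
  { x : (n : ℕ) → Edge k N A n // ∀ n, (x n).src = (x (n + 1)).rg }

/-- A finite path of length `ℓ` beginning at level `0`: a composable string of edges,
together with the vertices it visits.  Length-`0` paths are vertices of `V₀`. -/
structure FinPath (ℓ : ℕ) : Type where
  vtx : Fin (ℓ + 1) → Fin N
  edge : (i : Fin ℓ) → Edge k N A i
  rg_eq : ∀ i : Fin ℓ, (edge i).rg = vtx i.castSucc
  src_eq : ∀ i : Fin ℓ, (edge i).src = vtx i.succ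

/-- `FB`: the set of all finite paths (of all lengths) beginning at level `0`. -/
abbrev FB : Type := Σ ℓ : ℕ, FinPath k N A ℓ

variable {k N A}

/-- The source (final) vertex of a finite path. -/
def FinPath.src {ℓ : ℕ} (lam : FinPath k N A ℓ) : Fin N := lam.vtx (Fin.last ℓ)

/-- The range (initial, level-0) vertex of a finite path. -/
def FinPath.rg {ℓ : ℕ} (lam : FinPath k N A ℓ) : Fin N := lam.vtx 0

/-- The length-0 finite path at the level-0 vertex `v`. -/
def vertexPath (v : Fin N) : FinPath k N A 0 where
  vtx := fun _ => v
  edge := fun i => i.elim0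
  rg_eq := fun i => i.elim0
  src_eq := fun i => i.elim0

/-- The cylinder set `[λ]` of a finite path `λ`: all infinite paths with initial
segment `λ`. -/
def Cyl {ℓ : ℕ} (lam : FinPath k N A ℓ) : Set (PathSpace k N A) :=
  { x | (x.1 0).rg = lam.rg ∧ ∀ i : Fin ℓ, x.1 i = lam.edge i }

variable (k N A) in
/-- The collection of all cylinder sets. -/
def cylinderSets : Set (Set (PathSpace k N A)) :=
  { S | ∃ (ℓ : ℕ) (lam : FinPath k N A ℓ), S = Cyl lam }

/-- The cylinder-set topology on the infinite path space. -/
instance : TopologicalSpace (PathSpace k N A) :=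
  generateFrom (cylinderSets k N A)

/-- The Borel σ-algebra of the cylinder-set topology. -/
instance : MeasurableSpace (PathSpace k N A) := borel _

instance : BorelSpace (PathSpace k N A) := ⟨rfl⟩

lemma isOpen_cyl {ℓ : ℕ} (lam : FinPath k N A ℓ) : IsOpen (Cyl lam) :=
  isOpen_generateFrom_of_mem ⟨ℓ, lam, rfl⟩

lemma measurableSet_cyl {ℓ : ℕ} (lam : FinPath k N A ℓ) : MeasurableSet (Cyl lam) :=
  (isOpen_cyl lam).measurableSet

/-- Edges form a finite type. -/
def edgeEquiv (n : ℕ) : Edge k N A n ≃ Σ p : Fin N, Σ q : Fin N, Fin (A (n : Fin k) p q) where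
  toFun e := ⟨e.rg, e.src, e.idx⟩
  invFun t := ⟨t.1, t.2.1, t.2.2⟩
  left_inv e := rfl
  right_inv t := rfl

instance (n : ℕ) : Finite (Edge k N A n) := @Finite.of_equiv _ _ (@Finite.instSigma _ _ _ fun _ => Finite.instSigma) (edgeEquiv n).symm

instance (ℓ : ℕ) : Finite (FinPath k N A ℓ) := by
  have hinj : Function.Injective
      (fun lam : FinPath k N A ℓ => (lam.vtx, lam.edge)) := by
    rintro ⟨v, e, h1, h2⟩ ⟨v', e', h1', h2'⟩ h
    simp only [Prod.mk.injEq] at h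
    obtain ⟨hv, he⟩ := h
    subst hv; subst he; rfl
  exact Finite.of_injective _ hinj

instance : Countable (FB k N A) := by infer_instance

/-- The initial segment of length `m` of an infinite path. -/
def prefixPath (x : PathSpace k N A) (m : ℕ) : FinPath k N A m where
  vtx := fun i => (x.1 i).rg
  edge := fun i => x.1 i
  rg_eq := fun _ => rfl
  src_eq := fun i => x.2 i

lemma mem_cyl_prefixPath (x : PathSpace k N A) (m : ℕ) : x ∈ Cyl (prefixPath x m) :=
  ⟨rfl, fun _ => rfl⟩

lemma measurableSet_coord (j : ℕ) (P : Edge k N A j → Prop) :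
    MeasurableSet { x : PathSpace k N A | P (x.1 j) } := by
  have h : { x : PathSpace k N A | P (x.1 j) }
      = ⋃ (lam : FinPath k N A (j + 1)) (_ : P (lam.edge (Fin.last j))), Cyl lam := by
    ext x
    simp only [Set.mem_setOf_eq, Set.mem_iUnion]
    constructor
    · intro hx
      exact ⟨prefixPath x (j + 1), hx, mem_cyl_prefixPath x (j + 1)⟩
    · rintro ⟨lam, hP, -, hedge⟩
      have hx : x.1 j = lam.edge (Fin.last j) := hedge (Fin.last j)
      rw [hx]; exact hP
  rw [h]
  exact MeasurableSet.iUnion fun lam => MeasurableSet.iUnion fun _ => measurableSet_cyl lam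

/-- The first level at which two infinite paths differ. -/
noncomputable def firstDiff (x y : PathSpace k N A) : ℕ := sInf { n | x.1 n ≠ y.1 n }

/-- The function `d_w` associated to a weight-type function `w` on finite paths:
`d_w(x,x) = 0`; `d_w(x,y) = 1` if `x` and `y` have no common initial sub-path (i.e. they
do not even start at the same level-0 vertex); and otherwise `d_w(x,y) = w(x ∧ y)`, the
value of `w` on the longest common initial sub-path of `x` and `y`. -/
noncomputable def distW (w : FB k N A → ℝ) (x y : PathSpace k N A) : ℝ :=
  if x = y then 0
  else if (x.1 0).rg = (y.1 0).rg then w ⟨firstDiff x y, prefixPath x (firstDiff x y)⟩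
  else 1

/-- `η` is an (initial) sub-path of `λ`. -/
def IsSubPath {m ℓ : ℕ} (η : FinPath k N A m) (lam : FinPath k N A ℓ) : Prop :=
  ∃ h : m ≤ ℓ, η.rg = lam.rg ∧ ∀ i : Fin m, η.edge i = lam.edge (Fin.castLE h i)

/-- `lam ∈ F_γ B` : the finite path `lam` extends `γ`. -/
def Extends {m : ℕ} (γ : FinPath k N A m) (lam : FB k N A) : Prop :=
  IsSubPath γ lam.2

/-- The spectral radius of a matrix of nonnegative integers, as a real number. -/
noncomputable def specRad {N : ℕ} (M : Matrix (Fin N) (Fin N) ℕ) : ℝ :=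
  (spectralRadius ℂ (M.map (Nat.cast : ℕ → ℂ))).toReal

/-- The weight `w_δ` on the stationary `k`-Bratteli diagram of `A`, relative to data
`ρ : Fin k → ℝ` (the spectral radii) and `xv : Fin N → ℝ` (the Perron–Frobenius
eigenvector): on a path `η` of length `q·k + t` (`0 ≤ t ≤ k-1`) it is
`(ρ₁^{q+1} ⋯ ρ_t^{q+1} · ρ_{t+1}^q ⋯ ρ_k^q)^{-1/δ} · xv (s η)`. -/
noncomputable def wt (δ : ℝ) (ρ : Fin k → ℝ) (xv : Fin N → ℝ) (lam : FB k N A) : ℝ :=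
  (∏ i : Fin k, ρ i ^ (if (i : ℕ) < lam.1 % k then lam.1 / k + 1 else lam.1 / k))
      ^ (-(1 / δ)) * xv lam.2.src

/-- The value `M([λ]) = (ρ₁⋯ρ_t)^{-(q+1)} (ρ_{t+1}⋯ρ_k)^{-q} · x_{s(λ)}` of the
measure `M` on the cylinder set of a path of length `q·k + t`. -/
noncomputable def Mval (ρ : Fin k → ℝ) (xv : Fin N → ℝ) (lam : FB k N A) : ℝ :=
  (∏ i : Fin k, ρ i ^ (if (i : ℕ) < lam.1 % k then lam.1 / k + 1 else lam.1 / k))⁻¹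
    * xv lam.2.src

/-- A family of matrices is irreducible if for every pair of indices some finite product
of matrices from the family has positive corresponding entry. -/
def IrreducibleFamily {k N : ℕ} (A : Fin k → Matrix (Fin N) (Fin N) ℕ) : Prop :=
  ∀ a b : Fin N, ∃ l : List (Fin k), 0 < (l.map A).prod a b

/-- A single square matrix with nonnegative integer entries is irreducible if for every
pair of indices some positive power has positive corresponding entry. -/
def MatIrreducible {N : ℕ} (B : Matrix (Fin N) (Fin N) ℕ) : Prop :=
  ∀ a b : Fin N, ∃ m : ℕ, 0 < m ∧ 0 < (B ^ m) a b

/-- The diameter (in `ℝ≥0∞`) of a set of infinite paths relative to `d_w`. -/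
noncomputable def diamW (w : FB k N A → ℝ) (U : Set (PathSpace k N A)) : ℝ≥0∞ :=
  ⨆ (x) (_ : x ∈ U) (y) (_ : y ∈ U), ENNReal.ofReal (distW w x y)

/-- The `t`-dimensional Hausdorff (outer) measure of a set `Z` relative to the metric
`d_w`: `H^t(Z) = lim_{ε → 0} inf { Σᵢ (diam Uᵢ)^t : Z ⊆ ⋃ᵢ Uᵢ, diam Uᵢ < ε }`. -/
noncomputable def hausW (w : FB k N A → ℝ) (t : ℝ) (Z : Set (PathSpace k N A)) : ℝ≥0∞ :=
  ⨆ (ε : ℝ≥0∞) (_ : 0 < ε),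
    ⨅ (U : ℕ → Set (PathSpace k N A)) (_ : Z ⊆ ⋃ n, U n)
      (_ : ∀ n, diamW w (U n) < ε), ∑' n, diamW w (U n) ^ t

lemma natCast_mul_add (n i : ℕ) : ((n * k + i : ℕ) : Fin k) = (i : Fin k) := by
  push_cast
  simp [Fin.natCast_self]

/-- Transport of edges between levels governed by the same matrix (the diagram is
stationary with period `k`). -/
def Edge.cast {i j : ℕ} (h : (i : Fin k) = (j : Fin k)) (e : Edge k N A i) :
    Edge k N A j where
  rg := e.rg
  src := e.src
  idx := Fin.cast (by rw [h]) e.idx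

/-- The cylinder set `[γ e]` of a finite path `γ` (of length `m`) extended by one
further edge `e` at level `m`. -/
def cylExt {m : ℕ} (γ : FinPath k N A m) (e : Edge k N A m) : Set (PathSpace k N A) :=
  Cyl γ ∩ { x | x.1 m = e }

lemma measurableSet_cylExt {m : ℕ} (γ : FinPath k N A m) (e : Edge k N A m) :
    MeasurableSet (cylExt γ e) :=
  (measurableSet_cyl γ).inter (measurableSet_coord m fun f => f = e)

/-- The cylinder set `[λ μ]` of the concatenation of `λ ∈ F^{nk}B` with `μ ∈ F^{k}B`
(the diagram being stationary of period `k`, `μ` concatenates onto `λ`). -/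
def cylCat {n : ℕ} (lam : FinPath k N A (n * k)) (η : FinPath k N A k) :
    Set (PathSpace k N A) :=
  Cyl lam ∩ { x | (x.1 (n * k)).rg = η.rg } ∩
    ⋂ i : Fin k,
      { x | x.1 (n * k + (i : ℕ)) = Edge.cast (natCast_mul_add n (i : ℕ)).symm (η.edge i) }

lemma measurableSet_cylCat {n : ℕ} (lam : FinPath k N A (n * k)) (η : FinPath k N A k) :
    MeasurableSet (cylCat lam η) :=
  ((measurableSet_cyl lam).inter
      (measurableSet_coord (n * k) (fun e => e.rg = η.rg))).inter
    (MeasurableSet.iInter fun i => measurableSet_coord (n * k + (i : ℕ))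
      (fun e => e = Edge.cast (natCast_mul_add n (i : ℕ)).symm (η.edge i)))



end KBratteli

namespace KBratteli

variable {k N : ℕ} [NeZero k] {A : Fin k → Matrix (Fin N) (Fin N) ℕ}

section L2

variable (M : MeasureTheory.Measure (PathSpace k N A)) [MeasureTheory.IsFiniteMeasure M]

/-- The indicator function `χ_{[λ]}` of a cylinder set, as an element of `L²(X_B, M)`. -/
noncomputable def chi {ℓ : ℕ} (lam : FinPath k N A ℓ) : Lp ℂ 2 M :=
  indicatorConstLp 2 (measurableSet_cyl lam) (measure_ne_top M _) (1 : ℂ)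

/-- The indicator function `χ_{[γ e]}` of the cylinder of a path `γ` extended by one
further edge `e`, as an element of `L²(X_B, M)`. -/
noncomputable def chiE {m : ℕ} (γ : FinPath k N A m) (e : Edge k N A m) : Lp ℂ 2 M :=
  indicatorConstLp 2 (measurableSet_cylExt γ e) (measure_ne_top M _) (1 : ℂ)

/-- The indicator function `χ_{[λ μ]}` of the cylinder of the concatenation of
`λ ∈ F^{nk}B` and `μ ∈ F^{k}B`, as an element of `L²(X_B, M)`. -/
noncomputable def chiC {n : ℕ} (lam : FinPath k N A (n * k)) (η : FinPath k N A k) :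
    Lp ℂ 2 M :=
  indicatorConstLp 2 (measurableSet_cylCat lam η) (measure_ne_top M _) (1 : ℂ)

/-- The constant function `1` in `L²(X_B, M)`. -/
noncomputable def oneL2 : Lp ℂ 2 M :=
  indicatorConstLp 2 MeasurableSet.univ (measure_ne_top M _) (1 : ℂ)

/-- `Ṽ_m`, the linear span in `L²(X_B, M)` of the indicators of cylinders of paths of
length `m`. -/
noncomputable def Vt (m : ℕ) : Submodule ℂ (Lp ℂ 2 M) :=
  Submodule.span ℂ (Set.range fun lam : FinPath k N A m => chi M lam)

/-- `𝒲_n = 𝒱_{n+1} ⊓ 𝒱_n^⊥` where `𝒱_n = Ṽ_{nk}`. -/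
noncomputable def Wn (n : ℕ) : Submodule ℂ (Lp ℂ 2 M) :=
  Vt M ((n + 1) * k) ⊓ (Vt M (n * k))ᗮ

/-- `E_{-1}`: the subspace of constant functions. -/
noncomputable def Eneg : Submodule ℂ (Lp ℂ 2 M) :=
  Submodule.span ℂ {oneL2 M}

/-- `E_0 = span{ M([v])⁻¹ χ_{[v]} − M([v'])⁻¹ χ_{[v']} : v ≠ v' ∈ V₀ }`. -/
noncomputable def Ezero : Submodule ℂ (Lp ℂ 2 M) :=
  Submodule.span ℂ
    { f | ∃ v v' : Fin N, v ≠ v' ∧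
        f = (((M (Cyl (vertexPath v))).toReal : ℂ))⁻¹ • chi M (vertexPath v)
            - (((M (Cyl (vertexPath v'))).toReal : ℂ))⁻¹ • chi M (vertexPath v') }

/-- `E_γ = span{ M([γe])⁻¹ χ_{[γe]} − M([γe'])⁻¹ χ_{[γe']} }` over distinct edges
`e ≠ e'` with range `s(γ)`. -/
noncomputable def Esub {m : ℕ} (γ : FinPath k N A m) : Submodule ℂ (Lp ℂ 2 M) :=
  Submodule.span ℂ
    { f | ∃ e e' : Edge k N A m, e ≠ e' ∧ e.rg = γ.src ∧ e'.rg = γ.src ∧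
        f = (((M (cylExt γ e)).toReal : ℂ))⁻¹ • chiE M γ e
            - (((M (cylExt γ e')).toReal : ℂ))⁻¹ • chiE M γ e' }

noncomputable instance (m : ℕ) : FiniteDimensional ℂ (Vt M m) :=
  FiniteDimensional.span_of_finite ℂ (Set.finite_range _)

noncomputable instance : FiniteDimensional ℂ (Eneg M) :=
  FiniteDimensional.span_of_finite ℂ (Set.finite_singleton _)

/-- `Ξ_q`: the orthogonal projection of `L²(X_B, M)` onto `R_q = Ṽ_{qk}`. -/
noncomputable def Xi (q : ℕ) : Lp ℂ 2 M →L[ℂ] Lp ℂ 2 M :=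
  (Vt M (q * k)).subtypeL.comp (Vt M (q * k)).orthogonalProjectionOnto

/-- `Ξ_{-1}`: the orthogonal projection onto the constants `R_{-1}`. -/
noncomputable def XiNeg : Lp ℂ 2 M →L[ℂ] Lp ℂ 2 M :=
  (Eneg M).subtypeL.comp (Eneg M).orthogonalProjectionOnto

/-- `P_q = Ξ_q − Ξ_{q-1}` (with `Ξ_{-1}` the projection onto the constants). -/
noncomputable def Pq : ℕ → (Lp ℂ 2 M →L[ℂ] Lp ℂ 2 M)
  | 0 => Xi M 0 - XiNeg M
  | (q + 1) => Xi M (q + 1) - Xi M q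


/-- `R_{q-1}` for `q ∈ ℕ`, with the convention `R_{-1} = ` constants. -/
noncomputable def Rprev : ℕ → Submodule ℂ (Lp ℂ 2 M)
  | 0 => Eneg M
  | (q + 1) => Vt M (q * k)

/-- The domain of the Dirac operator `D`. -/
noncomputable def domD (α : ℕ → ℝ) : Set (Lp ℂ 2 M) :=
  { f | Summable fun q : ℕ => α q ^ 2 * ‖Pq M q f‖ ^ 2 }

/-- The Dirac operator `D f = Σ_q α_q P_q f`. -/
noncomputable def opD (α : ℕ → ℝ) (f : Lp ℂ 2 M) : Lp ℂ 2 M :=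
  ∑' q : ℕ, ((α q : ℂ)) • Pq M q f

end L2

end KBratteli

namespace KBratteli

section Aux

variable {k N : ℕ} [NeZero k] {A : Fin k → Matrix (Fin N) (Fin N) ℕ}

noncomputable instance (n : ℕ) : Fintype (Edge k N A n) := Fintype.ofFinite _
noncomputable instance (ℓ : ℕ) : Fintype (FinPath k N A ℓ) := Fintype.ofFinite _

lemma FinPath.ext' {m : ℕ} {γ γ' : FinPath k N A m} (hv : γ.vtx = γ'.vtx)
    (he : γ.edge = γ'.edge) : γ = γ' := by
  cases γ; cases γ'
  dsimp at hv he
  subst hv; subst he; rfl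

lemma FinPath.eq_of_parts {m : ℕ} {γ γ' : FinPath k N A m} (h0 : γ.rg = γ'.rg)
    (he : ∀ i : Fin m, γ.edge i = γ'.edge i) : γ = γ' := by
  apply FinPath.ext'
  · funext i
    induction i using Fin.cases with
    | zero => exact h0
    | succ j => rw [← γ.src_eq j, ← γ'.src_eq j, he j]
  · funext i; exact he i

lemma cyl_disjoint {m : ℕ} {γ γ' : FinPath k N A m} (h : γ ≠ γ') :
    Disjoint (Cyl γ) (Cyl γ') := by
  rw [Set.disjoint_left]
  rintro x ⟨h0, he⟩ ⟨h0', he'⟩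
  exact h (FinPath.eq_of_parts (h0.symm.trans h0')
    (fun i => (he i).symm.trans (he' i)))

lemma rg_coord_of_mem_cyl {m : ℕ} {γ : FinPath k N A m} {x : PathSpace k N A}
    (hx : x ∈ Cyl γ) : (x.1 m).rg = γ.src := by
  obtain ⟨h0, he⟩ := hx
  cases m with
  | zero =>
    refine h0.trans ?_
    show γ.vtx 0 = γ.vtx (Fin.last 0)
    congr 1
  | succ j =>
    have h1 : (x.1 j).src = (x.1 (j + 1)).rg := x.2 j
    have h2 : x.1 j = γ.edge (Fin.last j) := he (Fin.last j)
    have h3 := γ.src_eq (Fin.last j)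
    rw [← h1, h2, h3, Fin.succ_last]
    rfl

lemma cylExt_subset {m : ℕ} (γ : FinPath k N A m) (e : Edge k N A m) :
    cylExt γ e ⊆ Cyl γ := Set.inter_subset_left

lemma cylExt_eq_empty {m : ℕ} {γ : FinPath k N A m} {e : Edge k N A m}
    (h : e.rg ≠ γ.src) : cylExt γ e = ∅ := by
  ext y
  simp only [cylExt, Set.mem_inter_iff, Set.mem_setOf_eq, Set.mem_empty_iff_false, iff_false,
    not_and]
  intro hy hye
  exact absurd (by rw [← hye]; exact rg_coord_of_mem_cyl hy) h

lemma cylExt_disjoint {m : ℕ} (γ : FinPath k N A m) {e e' : Edge k N A m} (h : e ≠ e') :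
    Disjoint (cylExt γ e) (cylExt γ e') := by
  rw [Set.disjoint_left]
  rintro y ⟨-, hy⟩ ⟨-, hy'⟩
  exact h ((hy.symm.trans hy' : (e : Edge k N A m) = e'))

lemma cyl_eq_iUnion_cylExt {m : ℕ} (γ : FinPath k N A m) :
    Cyl γ = ⋃ e : Edge k N A m, cylExt γ e := by
  ext y
  constructor
  · intro hy
    exact Set.mem_iUnion.2 ⟨y.1 m, hy, rfl⟩
  · intro hy
    obtain ⟨e, hy⟩ := Set.mem_iUnion.1 hy
    exact hy.1

/-- Truncation of a path of length `m+1` to length `m`. -/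
def FinPath.trunc {m : ℕ} (lam : FinPath k N A (m + 1)) : FinPath k N A m where
  vtx i := lam.vtx i.castSucc
  edge i := lam.edge i.castSucc
  rg_eq i := lam.rg_eq i.castSucc
  src_eq i := (lam.src_eq i.castSucc).trans (congrArg lam.vtx (Fin.succ_castSucc i))

/-- The last edge of a path of length `m+1`. -/
def FinPath.lastE {m : ℕ} (lam : FinPath k N A (m + 1)) : Edge k N A m :=
  lam.edge (Fin.last m)

lemma FinPath.trunc_src {m : ℕ} (lam : FinPath k N A (m + 1)) :
    lam.trunc.src = lam.vtx (Fin.last m).castSucc := rfl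

lemma FinPath.lastE_rg {m : ℕ} (lam : FinPath k N A (m + 1)) :
    lam.lastE.rg = lam.trunc.src := lam.rg_eq (Fin.last m)

/-- Extension of a path of length `m` by one edge. -/
def FinPath.ext1 {m : ℕ} (γ : FinPath k N A m) (e : Edge k N A m) (h : e.rg = γ.src) :
    FinPath k N A (m + 1) where
  vtx i := Fin.lastCases e.src (fun j => γ.vtx j) i
  edge i := Fin.lastCases (motive := fun i : Fin (m + 1) => Edge k N A i) e
    (fun j => γ.edge j) i
  rg_eq i := by
    induction i using Fin.lastCases with
    | last =>
      simp only [Fin.lastCases_last]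
      rw [show (Fin.last m).castSucc = (Fin.last m).castSucc from rfl]
      rw [Fin.lastCases_castSucc (motive := fun _ : Fin (m+2) => Fin N)]
      exact h
    | cast j =>
      simp only [Fin.lastCases_castSucc]
      exact γ.rg_eq j
  src_eq i := by
    induction i using Fin.lastCases with
    | last =>
      simp [Fin.lastCases_last, Fin.succ_last]
    | cast j =>
      simp only [Fin.lastCases_castSucc, Fin.succ_castSucc]
      exact γ.src_eq j

lemma FinPath.trunc_ext1 {m : ℕ} (γ : FinPath k N A m) (e : Edge k N A m)
    (h : e.rg = γ.src) : (γ.ext1 e h).trunc = γ := by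
  apply FinPath.ext'
  · funext i
    simp [FinPath.trunc, FinPath.ext1]
  · funext i
    simp [FinPath.trunc, FinPath.ext1]

lemma FinPath.lastE_ext1 {m : ℕ} (γ : FinPath k N A m) (e : Edge k N A m)
    (h : e.rg = γ.src) : (γ.ext1 e h).lastE = e := by
  simp [FinPath.lastE, FinPath.ext1]

lemma cyl_succ {m : ℕ} (lam : FinPath k N A (m + 1)) :
    Cyl lam = cylExt lam.trunc lam.lastE := by
  ext y
  constructor
  · rintro ⟨h0, he⟩
    refine ⟨⟨h0.trans ?_, fun i => he i.castSucc⟩, he (Fin.last m)⟩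
    show lam.vtx 0 = lam.vtx ((0 : Fin (m+1)).castSucc)
    rw [Fin.castSucc_zero]
  · rintro ⟨⟨h0, he⟩, hm⟩
    refine ⟨h0.trans ?_, fun i => ?_⟩
    · show lam.vtx ((0 : Fin (m+1)).castSucc) = lam.vtx 0
      rw [Fin.castSucc_zero]
    · induction i using Fin.lastCases with
      | last => exact hm
      | cast j => exact he j

lemma cylExt_eq_cyl_ext1 {m : ℕ} (γ : FinPath k N A m) (e : Edge k N A m)
    (h : e.rg = γ.src) : cylExt γ e = Cyl (γ.ext1 e h) := by
  rw [cyl_succ (γ.ext1 e h), FinPath.lastE_ext1, FinPath.trunc_ext1]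

end Aux

section LpAux

variable {α : Type*} [MeasurableSpace α] {μ : MeasureTheory.Measure α}
  [MeasureTheory.IsFiniteMeasure μ]

lemma coeFn_finset_sum {ι : Type*} (t : Finset ι) (f : ι → Lp ℂ 2 μ) :
    ⇑(∑ i ∈ t, f i) =ᵐ[μ] fun x => ∑ i ∈ t, f i x := by
  classical
  induction t using Finset.induction with
  | empty => simp only [Finset.sum_empty]; exact Lp.coeFn_zero ℂ 2 μ
  | insert a s hnot ih =>
    rw [Finset.sum_insert hnot]
    filter_upwards [Lp.coeFn_add (f a) (∑ i ∈ s, f i), ih] with y h1 h2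
    rw [h1, Pi.add_apply, h2, Finset.sum_insert hnot]

lemma indicatorConstLp_congr_set {s t : Set α} (h : s = t) (hs : MeasurableSet s)
    (ht : MeasurableSet t) (hμs : μ s ≠ ⊤) (hμt : μ t ≠ ⊤) (c : ℂ) :
    MeasureTheory.indicatorConstLp 2 hs hμs c = MeasureTheory.indicatorConstLp 2 ht hμt c := by
  subst h; rfl

lemma indicatorConstLp_iUnion_eq_sum {ι : Type*} [Fintype ι] {s : ι → Set α}
    (hs : ∀ i, MeasurableSet (s i)) (hd : ∀ i j, i ≠ j → Disjoint (s i) (s j)) :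
    MeasureTheory.indicatorConstLp 2 (MeasurableSet.iUnion hs)
        (MeasureTheory.measure_ne_top μ _) (1 : ℂ) =
      ∑ i, MeasureTheory.indicatorConstLp 2 (hs i) (MeasureTheory.measure_ne_top μ _) (1 : ℂ) := by
  classical
  apply Lp.ext
  have h1 := MeasureTheory.indicatorConstLp_coeFn
    (p := 2) (hs := MeasurableSet.iUnion hs) (hμs := MeasureTheory.measure_ne_top μ _) (c := (1:ℂ))
  have h2 := coeFn_finset_sum (Finset.univ : Finset ι)
    (fun i => MeasureTheory.indicatorConstLp 2 (hs i) (MeasureTheory.measure_ne_top μ _) (1 : ℂ))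
  have h3 : ∀ᵐ y ∂μ, ∀ i : ι, (MeasureTheory.indicatorConstLp 2 (hs i)
      (MeasureTheory.measure_ne_top μ _) (1 : ℂ)) y = (s i).indicator (fun _ => (1:ℂ)) y := by
    rw [MeasureTheory.ae_all_iff]
    exact fun i => MeasureTheory.indicatorConstLp_coeFn
  filter_upwards [h1, h2, h3] with y hy1 hy2 hy3
  rw [hy1, hy2]
  have : ∑ i : ι, (MeasureTheory.indicatorConstLp 2 (hs i)
      (MeasureTheory.measure_ne_top μ _) (1 : ℂ)) y
      = ∑ i : ι, (s i).indicator (fun _ => (1:ℂ)) y := Finset.sum_congr rfl fun i _ => hy3 i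
  rw [this]
  by_cases hy : ∃ i, y ∈ s i
  · obtain ⟨i0, hi0⟩ := hy
    rw [Set.indicator_of_mem (Set.mem_iUnion.2 ⟨i0, hi0⟩)]
    rw [Finset.sum_eq_single i0]
    · rw [Set.indicator_of_mem hi0]
    · intro j _ hj
      refine Set.indicator_of_notMem (fun hyj => ?_) _
      exact (Set.disjoint_left.1 (hd j i0 hj) hyj) hi0
    · intro h; exact absurd (Finset.mem_univ i0) h
  · push_neg at hy
    rw [Set.indicator_of_notMem (fun hm => by
      obtain ⟨i, hi⟩ := Set.mem_iUnion.1 hm; exact hy i hi)]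
    refine (Finset.sum_eq_zero fun i _ => Set.indicator_of_notMem (hy i) _).symm

lemma inner_indicatorConstLp_indicatorConstLp {s t : Set α} (hs : MeasurableSet s)
    (ht : MeasurableSet t) (hμs : μ s ≠ ⊤) (hμt : μ t ≠ ⊤) :
    (inner ℂ (MeasureTheory.indicatorConstLp 2 hs hμs (1 : ℂ))
        (MeasureTheory.indicatorConstLp 2 ht hμt (1 : ℂ)) : ℂ)
      = ((μ (s ∩ t)).toReal : ℂ) := by
  rw [MeasureTheory.L2.inner_indicatorConstLp_one hs hμs,
    MeasureTheory.setIntegral_indicatorConstLp hs ht hμt (1 : ℂ)]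
  rw [Set.inter_comm t s]
  simp [Complex.real_smul, Measure.real]

lemma sup_inf_orthogonal_eq {E : Type*} [NormedAddCommGroup E] [InnerProductSpace ℂ E]
    (K S : Submodule ℂ E) (hS : S ≤ Kᗮ) : (K ⊔ S) ⊓ Kᗮ = S := by
  refine le_antisymm ?_ (le_inf le_sup_right hS)
  rintro f hf
  obtain ⟨hf1, hf2⟩ := Submodule.mem_inf.1 hf
  obtain ⟨g, hg, u, hu, rfl⟩ := Submodule.mem_sup.mp hf1
  have hgo : g ∈ Kᗮ := by
    have : g = (g + u) - u := by abel
    rw [this]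
    exact Submodule.sub_mem _ hf2 (hS hu)
  have hg0 : g = 0 := Submodule.disjoint_def.mp (Submodule.orthogonal_disjoint K) g hg hgo
  rw [hg0, zero_add]
  exact hu

end LpAux

section ChiAux

variable {k N : ℕ} [NeZero k] {A : Fin k → Matrix (Fin N) (Fin N) ℕ}
variable (M : MeasureTheory.Measure (PathSpace k N A)) [MeasureTheory.IsFiniteMeasure M]

lemma chiE_eq_chi {m : ℕ} (γ : FinPath k N A m) (e : Edge k N A m) (h : e.rg = γ.src) :
    chiE M γ e = chi M (γ.ext1 e h) :=
  indicatorConstLp_congr_set (cylExt_eq_cyl_ext1 γ e h) _ _ _ _ 1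

lemma chiE_eq_zero {m : ℕ} (γ : FinPath k N A m) (e : Edge k N A m) (h : e.rg ≠ γ.src) :
    chiE M γ e = 0 := by
  rw [show chiE M γ e = MeasureTheory.indicatorConstLp 2 MeasurableSet.empty
      (MeasureTheory.measure_ne_top M _) (1 : ℂ) from
    indicatorConstLp_congr_set (cylExt_eq_empty h) _ _ _ _ 1]
  exact MeasureTheory.indicatorConstLp_empty

lemma chi_eq_sum_chiE {m : ℕ} (γ : FinPath k N A m) :
    chi M γ = ∑ e : Edge k N A m, chiE M γ e := by
  rw [show chi M γ = MeasureTheory.indicatorConstLp 2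
      (MeasurableSet.iUnion fun e : Edge k N A m => measurableSet_cylExt γ e)
      (MeasureTheory.measure_ne_top M _) (1 : ℂ) from
    indicatorConstLp_congr_set (cyl_eq_iUnion_cylExt γ) _ _ _ _ 1]
  exact indicatorConstLp_iUnion_eq_sum _ (fun e e' hne => cylExt_disjoint γ hne)

lemma meas_cyl_eq_sum {m : ℕ} (γ : FinPath k N A m) :
    (M (Cyl γ)).toReal = ∑ e : Edge k N A m, (M (cylExt γ e)).toReal := by
  have h1 : M (Cyl γ) = ∑' e : Edge k N A m, M (cylExt γ e) := by
    rw [cyl_eq_iUnion_cylExt γ]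
    exact MeasureTheory.measure_iUnion
      (fun e e' hne => cylExt_disjoint γ hne) (fun e => measurableSet_cylExt γ e)
  rw [h1, tsum_fintype]
  exact ENNReal.toReal_sum fun e _ => MeasureTheory.measure_ne_top M _

variable {M}

lemma meas_cylExt_pos
    (hpos : ∀ (ℓ : ℕ) (lam : FinPath k N A ℓ), 0 < (M (Cyl lam)).toReal)
    {m : ℕ} (γ : FinPath k N A m) (e : Edge k N A m) (h : e.rg = γ.src) :
    0 < (M (cylExt γ e)).toReal := by
  rw [cylExt_eq_cyl_ext1 γ e h]
  exact hpos _ _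

lemma chi_mem_Vt {m : ℕ} (lam : FinPath k N A m) : chi M lam ∈ Vt M m :=
  Submodule.subset_span ⟨lam, rfl⟩

lemma chiE_mem_Vt_succ {m : ℕ} (γ : FinPath k N A m) (e : Edge k N A m) :
    chiE M γ e ∈ Vt M (m + 1) := by
  by_cases h : e.rg = γ.src
  · rw [chiE_eq_chi M γ e h]
    exact chi_mem_Vt _
  · rw [chiE_eq_zero M γ e h]
    exact Submodule.zero_mem _

lemma key_combo
    (hpos : ∀ (ℓ : ℕ) (lam : FinPath k N A ℓ), 0 < (M (Cyl lam)).toReal)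
    {m : ℕ} (γ : FinPath k N A m) (e : Edge k N A m) (h : e.rg = γ.src) :
    chiE M γ e - ((((M (cylExt γ e)).toReal / (M (Cyl γ)).toReal : ℝ)) : ℂ) • chi M γ
      ∈ Esub M γ := by
  classical
  set c : Edge k N A m → ℝ := fun e' => (M (cylExt γ e')).toReal with hc
  set b : ℝ := (M (Cyl γ)).toReal with hb
  have hce : c e ≠ 0 := (meas_cylExt_pos hpos γ e h).ne'
  have hbpos : 0 < b := hpos _ γ
  have hbne : b ≠ 0 := hbpos.ne'
  set u : Lp ℂ 2 M := ∑ e' : Edge k N A m,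
      ((c e' : ℝ) : ℂ) • (((c e : ℝ) : ℂ)⁻¹ • chiE M γ e - ((c e' : ℝ) : ℂ)⁻¹ • chiE M γ e')
    with hu
  have humem : u ∈ Esub M γ := by
    refine Submodule.sum_mem _ fun e' _ => ?_
    by_cases he' : e' = e
    · subst he'
      simp only [sub_self, smul_zero]
      exact Submodule.zero_mem _
    · by_cases hrg' : e'.rg = γ.src
      · refine Submodule.smul_mem _ _ (Submodule.subset_span ?_)
        exact ⟨e, e', fun hh => he' hh.symm, h, hrg', rfl⟩
      · have h0 : c e' = 0 := by
          have : cylExt γ e' = ∅ := cylExt_eq_empty hrg'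
          simp [hc, this]
        simp only [h0, Complex.ofReal_zero, zero_smul]
        exact Submodule.zero_mem _
  have hsum2 : ∑ e' : Edge k N A m,
      ((c e' : ℝ) : ℂ) • (((c e' : ℝ) : ℂ)⁻¹ • chiE M γ e') = chi M γ := by
    rw [chi_eq_sum_chiE M γ]
    refine Finset.sum_congr rfl fun e' _ => ?_
    by_cases hrg' : e'.rg = γ.src
    · have : ((c e' : ℝ) : ℂ) ≠ 0 := by
        exact_mod_cast (meas_cylExt_pos hpos γ e' hrg').ne'
      rw [smul_smul, mul_inv_cancel₀ this, one_smul]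
    · rw [chiE_eq_zero M γ e' hrg']
      simp
  have hsumc : ∑ e' : Edge k N A m, ((c e' : ℝ) : ℂ) = ((b : ℝ) : ℂ) := by
    rw [hb, meas_cyl_eq_sum M γ]
    push_cast
    rfl
  have huval : u = ((b : ℝ) : ℂ) • (((c e : ℝ) : ℂ)⁻¹ • chiE M γ e) - chi M γ := by
    rw [hu]
    rw [show (fun e' : Edge k N A m => ((c e' : ℝ) : ℂ) •
        (((c e : ℝ) : ℂ)⁻¹ • chiE M γ e - ((c e' : ℝ) : ℂ)⁻¹ • chiE M γ e')) = fun e' =>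
        ((c e' : ℝ) : ℂ) • (((c e : ℝ) : ℂ)⁻¹ • chiE M γ e)
          - ((c e' : ℝ) : ℂ) • (((c e' : ℝ) : ℂ)⁻¹ • chiE M γ e') from
      funext fun e' => smul_sub _ _ _]
    rw [Finset.sum_sub_distrib, hsum2, ← Finset.sum_smul, hsumc]
  have hfinal : chiE M γ e - (((c e / b : ℝ)) : ℂ) • chi M γ
      = (((c e / b : ℝ)) : ℂ) • u := by
    have hscal : (((c e / b : ℝ)) : ℂ) * ((b : ℝ) : ℂ) * (((c e : ℝ) : ℂ))⁻¹ = 1 := by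
      have h1 : ((c e : ℝ) : ℂ) ≠ 0 := Complex.ofReal_ne_zero.2 hce
      have h2 : ((b : ℝ) : ℂ) ≠ 0 := Complex.ofReal_ne_zero.2 hbne
      push_cast
      field_simp
    rw [huval, smul_sub, smul_smul, smul_smul, hscal, one_smul]
  rw [hfinal]
  exact Submodule.smul_mem _ _ humem

lemma Vt_succ_eq
    (hpos : ∀ (ℓ : ℕ) (lam : FinPath k N A ℓ), 0 < (M (Cyl lam)).toReal) (m : ℕ) :
    Vt M (m + 1) = Vt M m ⊔ ⨆ γ : FinPath k N A m, Esub M γ := by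
  refine le_antisymm ?_ (sup_le ?_ ?_)
  · rw [Vt]
    refine Submodule.span_le.2 ?_
    rintro _ ⟨lam, rfl⟩
    dsimp only
    have hchi : chi M lam = chiE M lam.trunc lam.lastE :=
      indicatorConstLp_congr_set (cyl_succ lam) _ _ _ _ 1
    rw [hchi]
    have h1 := key_combo hpos lam.trunc lam.lastE lam.lastE_rg
    have h2 : chiE M lam.trunc lam.lastE =
        (chiE M lam.trunc lam.lastE
          - ((((M (cylExt lam.trunc lam.lastE)).toReal / (M (Cyl lam.trunc)).toReal : ℝ)) : ℂ)
            • chi M lam.trunc)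
        + ((((M (cylExt lam.trunc lam.lastE)).toReal / (M (Cyl lam.trunc)).toReal : ℝ)) : ℂ)
            • chi M lam.trunc := by abel
    rw [h2]
    refine Submodule.add_mem _ ?_ ?_
    · exact Submodule.mem_sup_right (Submodule.mem_iSup_of_mem lam.trunc h1)
    · exact Submodule.mem_sup_left (Submodule.smul_mem _ _ (chi_mem_Vt _))
  · rw [Vt]
    refine Submodule.span_le.2 ?_
    rintro _ ⟨γ, rfl⟩
    dsimp only
    rw [chi_eq_sum_chiE M γ]
    exact Submodule.sum_mem _ fun e _ => chiE_mem_Vt_succ γ e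
  · refine iSup_le fun γ => Submodule.span_le.2 ?_
    rintro _ ⟨e, e', hne, hrg, hrg', rfl⟩
    exact Submodule.sub_mem _
      (Submodule.smul_mem _ _ (chiE_mem_Vt_succ γ e))
      (Submodule.smul_mem _ _ (chiE_mem_Vt_succ γ e'))

lemma Esub_le_orthogonal
    (hpos : ∀ (ℓ : ℕ) (lam : FinPath k N A ℓ), 0 < (M (Cyl lam)).toReal) (m : ℕ) :
    (⨆ γ : FinPath k N A m, Esub M γ) ≤ (Vt M m)ᗮ := by
  refine iSup_le fun γ => Submodule.span_le.2 ?_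
  rintro _ ⟨e, e', hne, hrg, hrg', rfl⟩
  rw [SetLike.mem_coe, Submodule.mem_orthogonal]
  intro u hu
  induction hu using Submodule.span_induction with
  | mem w hw =>
    obtain ⟨lam, rfl⟩ := hw
    have hcalc : ∀ (f : Edge k N A m), f.rg = γ.src →
        (inner ℂ (chi M lam) (chiE M γ f) : ℂ) = ((M (Cyl lam ∩ cylExt γ f)).toReal : ℂ) := by
      intro f _
      exact inner_indicatorConstLp_indicatorConstLp _ _ _ _
    rw [inner_sub_right, inner_smul_right, inner_smul_right, hcalc e hrg, hcalc e' hrg']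
    by_cases hlam : lam = γ
    · subst hlam
      rw [Set.inter_eq_self_of_subset_right (cylExt_subset lam e),
        Set.inter_eq_self_of_subset_right (cylExt_subset lam e')]
      have h1 : ((M (cylExt lam e)).toReal : ℂ) ≠ 0 := by
        exact_mod_cast (meas_cylExt_pos hpos lam e hrg).ne'
      have h2 : ((M (cylExt lam e')).toReal : ℂ) ≠ 0 := by
        exact_mod_cast (meas_cylExt_pos hpos lam e' hrg').ne'
      rw [inv_mul_cancel₀ h1, inv_mul_cancel₀ h2, sub_self]
    · have hd : Disjoint (Cyl lam) (Cyl γ) := cyl_disjoint hlam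
      have he0 : Cyl lam ∩ cylExt γ e = ∅ :=
        Set.subset_empty_iff.1 fun y hy =>
          (Set.disjoint_left.1 hd hy.1) (cylExt_subset γ e hy.2)
      have he0' : Cyl lam ∩ cylExt γ e' = ∅ :=
        Set.subset_empty_iff.1 fun y hy =>
          (Set.disjoint_left.1 hd hy.1) (cylExt_subset γ e' hy.2)
      rw [he0, he0']
      simp
  | zero => exact inner_zero_left _
  | add w₁ w₂ _ _ hw₁ hw₂ => rw [inner_add_left, hw₁, hw₂, add_zero]
  | smul a w _ hw => rw [inner_smul_left, hw, mul_zero]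

lemma Vt_inf_orthogonal_eq
    (hpos : ∀ (ℓ : ℕ) (lam : FinPath k N A ℓ), 0 < (M (Cyl lam)).toReal) (m : ℕ) :
    Vt M (m + 1) ⊓ (Vt M m)ᗮ = ⨆ γ : FinPath k N A m, Esub M γ := by
  rw [Vt_succ_eq hpos m]
  exact sup_inf_orthogonal_eq _ _ (Esub_le_orthogonal hpos m)

lemma Vt_mono
    (hpos : ∀ (ℓ : ℕ) (lam : FinPath k N A ℓ), 0 < (M (Cyl lam)).toReal)
    {a b : ℕ} (hab : a ≤ b) : Vt M a ≤ Vt M b := by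
  induction b, hab using Nat.le_induction with
  | base => exact le_rfl
  | succ b hab ih =>
    refine ih.trans ?_
    rw [Vt_succ_eq hpos b]
    exact le_sup_left

end ChiAux

/-- For every `m ≥ 1`, `Ṽ_m ∩ Ṽ_{m−1}^⊥` equals the span of the
union of the `E_γ` over `|γ| = m − 1`; consequently
`𝒲_n = ⊕_{j=1}^k (Ṽ_{nk+j} ∩ Ṽ_{nk+j−1}^⊥)`, an orthogonal direct sum. -/
theorem statement15 (k N : ℕ) [NeZero k] [NeZero N]
    (A : Fin k → Matrix (Fin N) (Fin N) ℕ)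
    (hcomm : ∀ i j, A i * A j = A j * A i)
    (hirr : IrreducibleFamily A)
    (hrow : ∀ (i : Fin k) (a : Fin N), 2 ≤ ∑ b, A i a b)
    (hAirr : MatIrreducible ((List.ofFn A).prod))
    (ρ : Fin k → ℝ) (hρ : ∀ i, ρ i = specRad (A i))
    (x : Fin N → ℝ) (hxpos : ∀ v, 0 < x v) (hxsum : ∑ v, x v = 1)
    (hxeig : ∀ i, ((A i).map (Nat.cast : ℕ → ℝ)).mulVec x = ρ i • x)
    (M : MeasureTheory.Measure (PathSpace k N A)) [MeasureTheory.IsProbabilityMeasure M]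
    (hM : ∀ lam : FB k N A, M (Cyl lam.2) = ENNReal.ofReal (Mval ρ x lam)) :
    (∀ m : ℕ, 1 ≤ m →
        Vt M m ⊓ (Vt M (m - 1))ᗮ = ⨆ γ : FinPath k N A (m - 1), Esub M γ) ∧
    (∀ n : ℕ,
        (∀ j ∈ Finset.Icc 1 k, ∀ j' ∈ Finset.Icc 1 k, j ≠ j' →
          ∀ f ∈ Vt M (n * k + j) ⊓ (Vt M (n * k + j - 1))ᗮ,
          ∀ g ∈ Vt M (n * k + j') ⊓ (Vt M (n * k + j' - 1))ᗮ,
            (inner ℂ f g : ℂ) = 0) ∧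
        Wn M n = ⨆ j ∈ Finset.Icc 1 k, Vt M (n * k + j) ⊓ (Vt M (n * k + j - 1))ᗮ) := by
  classical
  have hN : 0 < N := Nat.pos_of_ne_zero (NeZero.ne N)
  have hρpos : ∀ i, 0 < ρ i := by
    intro i
    set v : Fin N := ⟨0, hN⟩ with hv0
    have hv := congrFun (hxeig i) v
    rw [Pi.smul_apply, smul_eq_mul] at hv
    have hv' : ∑ b, ((A i v b : ℝ) * x b) = ρ i * x v := by
      rw [← hv, Matrix.mulVec, dotProduct]
      exact Finset.sum_congr rfl fun b _ => by rw [Matrix.map_apply]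
    have hex : ∃ b, 0 < A i v b := by
      by_contra hno
      push_neg at hno
      have hz : ∑ b, A i v b = 0 := Finset.sum_eq_zero fun b _ => Nat.le_zero.1 (hno b)
      have := hrow i v
      omega
    obtain ⟨b0, hb0⟩ := hex
    have hpos' : 0 < ∑ b, ((A i v b : ℝ) * x b) := by
      refine Finset.sum_pos' (fun b _ => mul_nonneg (Nat.cast_nonneg _) (hxpos b).le) ?_
      exact ⟨b0, Finset.mem_univ b0, mul_pos (by exact_mod_cast hb0) (hxpos b0)⟩
    rw [hv'] at hpos'
    nlinarith [hxpos v]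
  have hMvalpos : ∀ (ℓ : ℕ) (lam : FinPath k N A ℓ), 0 < Mval ρ x ⟨ℓ, lam⟩ := by
    intro ℓ lam
    exact mul_pos (inv_pos.2 (Finset.prod_pos fun i _ => pow_pos (hρpos i) _)) (hxpos _)
  have hpos : ∀ (ℓ : ℕ) (lam : FinPath k N A ℓ), 0 < (M (Cyl lam)).toReal := by
    intro ℓ lam
    rw [hM ⟨ℓ, lam⟩, ENNReal.toReal_ofReal (hMvalpos ℓ lam).le]
    exact hMvalpos ℓ lam
  refine ⟨?_, ?_⟩
  · intro m hm
    obtain ⟨n, rfl⟩ : ∃ n, m = n + 1 := ⟨m - 1, by omega⟩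
    simp only [Nat.add_sub_cancel]
    exact Vt_inf_orthogonal_eq hpos n
  · intro n
    constructor
    · intro j hj j' hj' hne f hf g hg
      rw [Finset.mem_Icc] at hj hj'
      rw [Submodule.mem_inf] at hf hg
      rcases lt_or_gt_of_ne hne with hlt | hgt
      · have h1 : Vt M (n * k + j) ≤ Vt M (n * k + j' - 1) := Vt_mono hpos (by omega)
        exact (Submodule.mem_orthogonal _ _).1 hg.2 f (h1 hf.1)
      · have h1 : Vt M (n * k + j') ≤ Vt M (n * k + j - 1) := Vt_mono hpos (by omega)
        rw [inner_eq_zero_symm]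
        exact (Submodule.mem_orthogonal _ _).1 hf.2 g (h1 hg.1)
    · have hdecomp : ∀ j : ℕ,
          Vt M (n * k + j) = Vt M (n * k) ⊔
            ⨆ i ∈ Finset.Icc 1 j, (Vt M (n * k + i) ⊓ (Vt M (n * k + i - 1))ᗮ) := by
        intro j
        induction j with
        | zero =>
          rw [Finset.Icc_eq_empty (by omega)]
          simp
        | succ j ih =>
          have hle : Vt M (n * k + j) ≤ Vt M (n * k + (j + 1)) := Vt_mono hpos (by omega)
          have h2 := Submodule.sup_orthogonal_inf_of_hasOrthogonalProjection hle
          have hidx : n * k + (j + 1) - 1 = n * k + j := by omega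
          have h3 : Vt M (n * k + (j + 1)) =
              Vt M (n * k + j) ⊔
                (Vt M (n * k + (j + 1)) ⊓ (Vt M (n * k + (j + 1) - 1))ᗮ) := by
            rw [hidx]
            conv_lhs => rw [← h2]
            rw [inf_comm]
          rw [h3, ih, ← Finset.insert_Icc_right_eq_Icc_add_one (by omega : 1 ≤ j + 1),
            Finset.iSup_insert]
          rw [sup_assoc]
          congr 1
          rw [sup_comm]
      have hk : (n + 1) * k = n * k + k := by ring
      rw [Wn, hk, hdecomp k]
      refine sup_inf_orthogonal_eq _ _ ?_
      refine iSup_le fun i => iSup_le fun hi => ?_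
      rw [Finset.mem_Icc] at hi
      exact le_trans inf_le_right
        (Submodule.orthogonal_le (Vt_mono hpos (by omega)))

end KBratteli
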